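/- arXiv:2208.06539 — 4 statements merged into one kernel-verified Lean document; each statement's English description precedes it below -/
import Mathlib

section
/- For a completely regular topological space X and a finite signed Borel (or Baire) measure μ on X, the total variation norm satisfies ‖μ‖ = sup { ∫ f dμ : f continuous bounded, ‖f‖_∞ ≤ 1 }. -/
open MeasureTheory

lemma exists_bcf_one_on_compact_zero_off_open {X : Type*} [TopologicalSpace X]
    [CompletelyRegularSpace X] {K U : Set X} (hK : IsCompact K) (hU : IsOpen U)
    (hKU : K ⊆ U) :
    ∃ f : BoundedContinuousFunction X ℝ, (∀ x, f x ∈ Set.Icc (0:ℝ) 1) ∧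
      (∀ x ∈ K, f x = 1) ∧ (∀ x ∉ U, f x = 0) := by
  classical
  rcases K.eq_empty_or_nonempty with h | hKne
  · exact ⟨0, by simp, by simp [h], by simp⟩
  have H : ∀ x : K, ∃ f : X → unitInterval, Continuous f ∧ f x = 0 ∧ Set.EqOn f 1 Uᶜ :=
    fun x => CompletelyRegularSpace.completely_regular (x : X) Uᶜ hU.isClosed_compl
      (fun h => h (hKU x.2))
  choose g hgc hg0 hg1 using H
  set W : K → Set X := fun x => {y | ((g x y : ℝ)) < 1/2} with hW
  have hWopen : ∀ x, IsOpen (W x) := fun x =>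
    isOpen_lt (continuous_subtype_val.comp (hgc x)) continuous_const
  have hcover : K ⊆ ⋃ x, W x := by
    intro y hy
    exact Set.mem_iUnion.2 ⟨⟨y, hy⟩, by simp [W, hg0 ⟨y, hy⟩]⟩
  obtain ⟨t, ht⟩ := hK.elim_finite_subcover W hWopen hcover
  have htne : t.Nonempty := by
    obtain ⟨y, hy⟩ := hKne
    obtain ⟨x, hx, -⟩ := Set.mem_iUnion₂.1 (ht hy)
    exact ⟨x, hx⟩
  set T : K → X → ℝ := fun x y => max 0 (min 1 (2 - 2 * (g x y : ℝ))) with hT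
  have hTc : ∀ x : K, Continuous (T x) := fun x =>
    continuous_const.max (continuous_const.min (continuous_const.sub
      (continuous_const.mul (continuous_subtype_val.comp (hgc x)))))
  have hT01 : ∀ x y, T x y ∈ Set.Icc (0:ℝ) 1 :=
    fun x y => ⟨le_max_left _ _, max_le (by norm_num) (min_le_left _ _)⟩
  have hTW : ∀ x y, y ∈ W x → T x y = 1 := by
    intro x y hy
    have : (g x y : ℝ) < 1/2 := hy
    have h1 : (1:ℝ) ≤ 2 - 2 * (g x y : ℝ) := by linarith
    simp [T, min_eq_left h1]
  have hTU : ∀ x y, y ∉ U → T x y = 0 := by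
    intro x y hy
    have : g x y = 1 := hg1 x hy
    simp [T, this]
  set G : X → ℝ := fun y => t.sup' htne (fun x => T x y) with hG
  have hGc : Continuous G :=
    Continuous.finset_sup'_apply htne (fun i _ => hTc i)
  have hG01 : ∀ y, G y ∈ Set.Icc (0:ℝ) 1 := by
    intro y
    constructor
    · obtain ⟨x, hx⟩ := htne
      exact le_trans (hT01 x y).1 (Finset.le_sup' (f := fun x => T x y) hx)
    · exact Finset.sup'_le _ _ fun x _ => (hT01 x y).2
  have hGK : ∀ y ∈ K, G y = 1 := by
    intro y hy
    obtain ⟨x, hx, hyW⟩ := Set.mem_iUnion₂.1 (ht hy)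
    have hle : T x y ≤ G y := Finset.le_sup' (f := fun x => T x y) hx
    rw [hTW x y hyW] at hle
    exact le_antisymm (hG01 y).2 hle
  have hGU : ∀ y, y ∉ U → G y = 0 := by
    intro y hy
    refine le_antisymm (Finset.sup'_le _ _ fun x _ => le_of_eq (hTU x y hy)) (hG01 y).1
  refine ⟨BoundedContinuousFunction.ofNormedAddCommGroup G hGc 1 ?_, ?_, ?_, ?_⟩
  · intro y
    rw [Real.norm_eq_abs, abs_le]
    exact ⟨by linarith [(hG01 y).1], (hG01 y).2⟩
  · intro y; exact hG01 y
  · intro y hy; exact hGK y hy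
  · intro y hy; exact hGU y hy


lemma integral_ge_measure_of_one_on {X : Type*} [TopologicalSpace X] [MeasurableSpace X]
    [BorelSpace X] (m : Measure X) [IsFiniteMeasure m] (g : BoundedContinuousFunction X ℝ)
    (hg : ∀ x, g x ∈ Set.Icc (0:ℝ) 1) {C : Set X} (hgC : ∀ x ∈ C, g x = 1) :
    (m C).toReal ≤ ∫ x, g x ∂m := by
  have hsub : C ⊆ g ⁻¹' {1} := fun x hx => hgC x hx
  have hclosed : IsClosed (g ⁻¹' {1}) := IsClosed.preimage g.continuous isClosed_singleton
  have hcl : ∀ x ∈ closure C, g x = 1 := fun x hx => closure_minimal hsub hclosed hx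
  have hmeas : MeasurableSet (closure C) := isClosed_closure.measurableSet
  have h1 : (m C).toReal ≤ (m (closure C)).toReal :=
    ENNReal.toReal_mono (measure_ne_top _ _) (measure_mono subset_closure)
  have h2 : ∫ x, Set.indicator (closure C) (fun _ => (1:ℝ)) x ∂m ≤ ∫ x, g x ∂m := by
    apply integral_mono
    · exact (integrable_indicator_iff hmeas).2 (integrableOn_const (measure_ne_top _ _))
    · exact g.integrable m
    · intro x
      by_cases hx : x ∈ closure C
      · simp [Set.indicator_of_mem hx, (hcl x hx).ge]
      · simp [Set.indicator_of_notMem hx, (hg x).1]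
  rw [integral_indicator_const _ hmeas, smul_eq_mul, mul_one] at h2
  exact le_trans h1 h2

lemma integral_le_measure_of_zero_off {X : Type*} [TopologicalSpace X] [MeasurableSpace X]
    [BorelSpace X] (m : Measure X) [IsFiniteMeasure m] (g : BoundedContinuousFunction X ℝ)
    (hg : ∀ x, g x ∈ Set.Icc (0:ℝ) 1) {U : Set X} (hUo : IsOpen U)
    (hgU : ∀ x ∉ U, g x = 0) :
    ∫ x, g x ∂m ≤ (m U).toReal := by
  have h2 : ∫ x, g x ∂m ≤ ∫ x, Set.indicator U (fun _ => (1:ℝ)) x ∂m := by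
    apply integral_mono (g.integrable m)
    · exact (integrable_indicator_iff hUo.measurableSet).2
        (integrableOn_const (measure_ne_top _ _))
    · intro x
      by_cases hx : x ∈ U
      · simp [Set.indicator_of_mem hx, (hg x).2]
      · simp [Set.indicator_of_notMem hx, (hgU x hx).le]
  rw [integral_indicator_const _ hUo.measurableSet] at h2
  simp at h2; exact h2


/-- For a completely regular topological space `X` and a finite signed Borel measure `μ`
(assumed regular, i.e. a Radon-type measure), the total variation norm of `μ` equals the
supremum of `∫ f dμ` over bounded continuous functions `f` with `‖f‖_∞ ≤ 1`, where
`∫ f dμ` is the integral against the Jordan decomposition of `μ`. -/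
theorem tvNorm_eq_sSup_boundedContinuous {X : Type*} [TopologicalSpace X]
    [CompletelyRegularSpace X] [MeasurableSpace X] [BorelSpace X]
    (μ : SignedMeasure X) (hreg : μ.totalVariation.Regular) :
    (μ.totalVariation Set.univ).toReal =
      sSup { r : ℝ | ∃ f : BoundedContinuousFunction X ℝ, ‖f‖ ≤ 1 ∧
        r = (∫ x, f x ∂μ.toJordanDecomposition.posPart) -
            ∫ x, f x ∂μ.toJordanDecomposition.negPart } := by
  classical
  haveI := hreg
  set P := μ.toJordanDecomposition.posPart with hPdef
  set N := μ.toJordanDecomposition.negPart with hNdef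
  have hTV : μ.totalVariation = P + N := rfl
  haveI : IsFiniteMeasure μ.totalVariation := by rw [hTV]; infer_instance
  have hTVapp : ∀ A : Set X, μ.totalVariation A = P A + N A := by
    intro A; rw [hTV, Measure.add_apply]
  -- upper bound
  have bound : ∀ f : BoundedContinuousFunction X ℝ, ‖f‖ ≤ 1 →
      (∫ x, f x ∂P) - ∫ x, f x ∂N ≤ (μ.totalVariation Set.univ).toReal := by
    intro f hf
    have h1 : ‖∫ x, f x ∂P‖ ≤ (P Set.univ).toReal := by
      calc ‖∫ x, f x ∂P‖ ≤ (P Set.univ).toReal * ‖f‖ := f.norm_integral_le_mul_norm P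
        _ ≤ (P Set.univ).toReal * 1 :=
          mul_le_mul_of_nonneg_left hf ENNReal.toReal_nonneg
        _ = (P Set.univ).toReal := mul_one _
    have h2 : ‖∫ x, f x ∂N‖ ≤ (N Set.univ).toReal := by
      calc ‖∫ x, f x ∂N‖ ≤ (N Set.univ).toReal * ‖f‖ := f.norm_integral_le_mul_norm N
        _ ≤ (N Set.univ).toReal * 1 :=
          mul_le_mul_of_nonneg_left hf ENNReal.toReal_nonneg
        _ = (N Set.univ).toReal := mul_one _
    rw [hTVapp, ENNReal.toReal_add (measure_ne_top P _) (measure_ne_top N _)]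
    have e1 : ∫ x, f x ∂P ≤ (P Set.univ).toReal := le_trans (le_abs_self _) h1
    have e2 : -(∫ x, f x ∂N) ≤ (N Set.univ).toReal := le_trans (neg_le_abs _) h2
    linarith
  -- lower bound
  have lower : ∀ ε : ℝ, 0 < ε → ∃ f : BoundedContinuousFunction X ℝ, ‖f‖ ≤ 1 ∧
      (μ.totalVariation Set.univ).toReal - ε ≤ (∫ x, f x ∂P) - ∫ x, f x ∂N := by
    intro ε hε
    set εe : ENNReal := ENNReal.ofReal (ε/4) with hεedef
    have hεe0 : εe ≠ 0 := by
      simp only [hεedef, ne_eq, ENNReal.ofReal_eq_zero, not_le]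
      linarith
    obtain ⟨S, hSm, hPS, hNSc⟩ := μ.toJordanDecomposition.mutuallySingular
    obtain ⟨K, hKS, hKc, hKlt⟩ := hSm.exists_isCompact_lt_add
      (measure_ne_top μ.totalVariation S) hεe0
    obtain ⟨U, hKU, hUo, hUlt⟩ := Set.exists_isOpen_lt_add K
      (measure_ne_top μ.totalVariation K) hεe0
    obtain ⟨L, hLS, hLc, hLlt⟩ := hSm.compl.exists_isCompact_lt_add
      (measure_ne_top μ.totalVariation Sᶜ) hεe0
    obtain ⟨V, hLV, hVo, hVlt⟩ := Set.exists_isOpen_lt_add L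
      (measure_ne_top μ.totalVariation L) hεe0
    -- basic measure identities
    have hPK : P K = 0 := le_antisymm (hPS ▸ measure_mono hKS) zero_le
    have hNL : N L = 0 := le_antisymm (hNSc ▸ measure_mono hLS) zero_le
    have hNuniv : N Set.univ = N S := by
      have h := measure_add_measure_compl (μ := N) hSm
      rw [hNSc, add_zero] at h
      exact h.symm
    have hPuniv : P Set.univ = P Sᶜ := by
      have h := measure_add_measure_compl (μ := P) hSm
      rw [hPS, zero_add] at h
      exact h.symm
    have hTVS : μ.totalVariation S = N S := by rw [hTVapp, hPS, zero_add]
    have hTVK : μ.totalVariation K = N K := by rw [hTVapp, hPK, zero_add]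
    have hTVSc : μ.totalVariation Sᶜ = P Sᶜ := by rw [hTVapp, hNSc, add_zero]
    have hTVL : μ.totalVariation L = P L := by rw [hTVapp, hNL, add_zero]
    -- N univ < N K + εe
    have hNK : N Set.univ < N K + εe := by
      rw [hNuniv, ← hTVS, ← hTVK]; exact hKlt
    -- P univ < P L + εe
    have hPL : P Set.univ < P L + εe := by
      rw [hPuniv, ← hTVSc, ← hTVL]; exact hLlt
    -- P U < εe
    have hPU : P U < εe := by
      have hstep : P U + N K ≤ μ.totalVariation U := by
        rw [hTVapp]
        exact add_le_add le_rfl (measure_mono hKU)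
      have h2 : P U + N K < εe + N K := by
        calc P U + N K ≤ μ.totalVariation U := hstep
          _ < μ.totalVariation K + εe := hUlt
          _ = εe + N K := by rw [hTVK, add_comm]
      exact (ENNReal.add_lt_add_iff_right (measure_ne_top N K)).1 h2
    -- N V < εe
    have hNV : N V < εe := by
      have hstep : N V + P L ≤ μ.totalVariation V := by
        rw [hTVapp, add_comm]
        exact add_le_add (measure_mono hLV) le_rfl
      have h2 : N V + P L < εe + P L := by
        calc N V + P L ≤ μ.totalVariation V := hstep
          _ < μ.totalVariation L + εe := hVlt
          _ = εe + P L := by rw [hTVL, add_comm]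
      exact (ENNReal.add_lt_add_iff_right (measure_ne_top P L)).1 h2
    -- Urysohn functions
    obtain ⟨f₁, hf₁Icc, hf₁K, hf₁U⟩ := exists_bcf_one_on_compact_zero_off_open hKc hUo hKU
    obtain ⟨f₂, hf₂Icc, hf₂L, hf₂V⟩ := exists_bcf_one_on_compact_zero_off_open hLc hVo hLV
    refine ⟨f₂ - f₁, ?_, ?_⟩
    · refine (BoundedContinuousFunction.norm_le zero_le_one).2 fun x => ?_
      have h1 := hf₁Icc x
      have h2 := hf₂Icc x
      simp only [BoundedContinuousFunction.coe_sub, Pi.sub_apply, Real.norm_eq_abs, abs_le]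
      exact ⟨by linarith [h1.2, h2.1], by linarith [h1.1, h2.2]⟩
    · have intP : ∫ x, (f₂ - f₁) x ∂P = (∫ x, f₂ x ∂P) - ∫ x, f₁ x ∂P := by
        simp only [BoundedContinuousFunction.coe_sub, Pi.sub_apply]
        exact integral_sub (f₂.integrable P) (f₁.integrable P)
      have intN : ∫ x, (f₂ - f₁) x ∂N = (∫ x, f₂ x ∂N) - ∫ x, f₁ x ∂N := by
        simp only [BoundedContinuousFunction.coe_sub, Pi.sub_apply]
        exact integral_sub (f₂.integrable N) (f₁.integrable N)
      have a1 : (P L).toReal ≤ ∫ x, f₂ x ∂P :=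
        integral_ge_measure_of_one_on P f₂ hf₂Icc hf₂L
      have a2 : ∫ x, f₁ x ∂P ≤ (P U).toReal :=
        integral_le_measure_of_zero_off P f₁ hf₁Icc hUo hf₁U
      have a3 : (N K).toReal ≤ ∫ x, f₁ x ∂N :=
        integral_ge_measure_of_one_on N f₁ hf₁Icc hf₁K
      have a4 : ∫ x, f₂ x ∂N ≤ (N V).toReal :=
        integral_le_measure_of_zero_off N f₂ hf₂Icc hVo hf₂V
      -- convert ENNReal inequalities to real ones
      have hε4 : (0:ℝ) ≤ ε/4 := by linarith
      have hPL_real : (P Set.univ).toReal ≤ (P L).toReal + ε/4 := by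
        have := ENNReal.toReal_mono
          (by finiteness : P L + εe ≠ ⊤) hPL.le
        rwa [ENNReal.toReal_add (measure_ne_top _ _) ENNReal.ofReal_ne_top,
          ENNReal.toReal_ofReal hε4] at this
      have hNK_real : (N Set.univ).toReal ≤ (N K).toReal + ε/4 := by
        have := ENNReal.toReal_mono
          (by finiteness : N K + εe ≠ ⊤) hNK.le
        rwa [ENNReal.toReal_add (measure_ne_top _ _) ENNReal.ofReal_ne_top,
          ENNReal.toReal_ofReal hε4] at this
      have hPU_real : (P U).toReal ≤ ε/4 := by
        have := ENNReal.toReal_mono ENNReal.ofReal_ne_top hPU.le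
        rwa [ENNReal.toReal_ofReal hε4] at this
      have hNV_real : (N V).toReal ≤ ε/4 := by
        have := ENNReal.toReal_mono ENNReal.ofReal_ne_top hNV.le
        rwa [ENNReal.toReal_ofReal hε4] at this
      rw [hTVapp, ENNReal.toReal_add (measure_ne_top P _) (measure_ne_top N _), intP, intN]
      linarith
  -- conclude
  have hbdd : BddAbove { r : ℝ | ∃ f : BoundedContinuousFunction X ℝ, ‖f‖ ≤ 1 ∧
      r = (∫ x, f x ∂P) - ∫ x, f x ∂N } := by
    refine ⟨(μ.totalVariation Set.univ).toReal, ?_⟩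
    rintro r ⟨f, hf, rfl⟩
    exact bound f hf
  apply le_antisymm
  · refine le_of_forall_pos_le_add fun ε hε => ?_
    obtain ⟨f, hf, hge⟩ := lower ε hε
    have hmem : (∫ x, f x ∂P) - ∫ x, f x ∂N ∈ { r : ℝ | ∃ f : BoundedContinuousFunction X ℝ,
        ‖f‖ ≤ 1 ∧ r = (∫ x, f x ∂P) - ∫ x, f x ∂N } := ⟨f, hf, rfl⟩
    have := le_csSup hbdd hmem
    linarith
  · refine Real.sSup_le ?_ ENNReal.toReal_nonneg
    rintro r ⟨f, hf, rfl⟩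
    exact bound f hf
end

section
/- If a family of finite measures μ(t) = f(t)·ν is L^2(ν)-differentiable at t₀ with derivative Φ'(t₀) of Φ(t) = f(t)^{1/2} in L^2(ν), then the total-variation derivative μ'(t₀) satisfies μ'(t₀) = 2·f(t₀)^{1/2}·Φ'(t₀)·ν, and in particular its density with respect to ν lies in L^1(ν). -/
open MeasureTheory Filter

section Aux

variable {X : Type*} [MeasurableSpace X] {ν : Measure X}

lemma integrable_coe_mul_L2 (u v : Lp ℝ 2 ν) :
    Integrable (fun x => (u : X → ℝ) x * (v : X → ℝ) x) ν := by
  have := L2.integrable_inner (𝕜 := ℝ) v u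
  simpa [RCLike.inner_apply, starRingEnd_apply] using this

lemma integral_abs_mul_le_L2 (u v : Lp ℝ 2 ν) :
    ∫ x, |(u : X → ℝ) x * (v : X → ℝ) x| ∂ν ≤ ‖u‖ * ‖v‖ := by
  have habs : ∫ x, |(u : X → ℝ) x * (v : X → ℝ) x| ∂ν
      = (inner ℝ (|u|) (|v|) : ℝ) := by
    rw [L2.inner_def]
    refine integral_congr_ae ?_
    filter_upwards [Lp.coeFn_abs u, Lp.coeFn_abs v] with x hu hv
    simp [hu, hv, RCLike.inner_apply, starRingEnd_apply, abs_mul, mul_comm]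
  rw [habs]
  calc (inner ℝ (|u|) (|v|) : ℝ) ≤ ‖|u|‖ * ‖|v|‖ := real_inner_le_norm _ _
  _ = ‖u‖ * ‖v‖ := by rw [norm_abs_eq_norm, norm_abs_eq_norm]

lemma totalVariation_withDensityᵥ_univ_toReal {h : X → ℝ} (hi : Integrable h ν) :
    ((MeasureTheory.SignedMeasure.totalVariation (ν.withDensityᵥ h)) Set.univ).toReal = ∫ x, |h x| ∂ν := by
  set g : X → ℝ := hi.1.mk h with hgdef
  have hg : StronglyMeasurable g := hi.1.stronglyMeasurable_mk
  have hae : h =ᵐ[ν] g := hi.1.ae_eq_mk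
  have hgi : Integrable g ν := hi.congr hae
  have hwd : ν.withDensityᵥ h = ν.withDensityᵥ g := WithDensityᵥEq.congr_ae hae
  have hjd := SignedMeasure.toJordanDecomposition_eq_of_eq_add_withDensity
    (t := (0 : SignedMeasure X)) (s := ν.withDensityᵥ g) hg.measurable hgi
    (VectorMeasure.MutuallySingular.zero_left) (by rw [zero_add])
  rw [hwd, SignedMeasure.totalVariation, hjd]
  simp only [SignedMeasure.toJordanDecomposition_zero, JordanDecomposition.zero_posPart,
    JordanDecomposition.zero_negPart, zero_add]
  rw [Measure.add_apply, withDensity_apply _ MeasurableSet.univ,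
    withDensity_apply _ MeasurableSet.univ, Measure.restrict_univ]
  have hsum : (∫⁻ x, ENNReal.ofReal (g x) ∂ν) + (∫⁻ x, ENNReal.ofReal (-g x) ∂ν)
      = ∫⁻ x, ENNReal.ofReal (|g x|) ∂ν := by
    rw [← lintegral_add_left' hgi.aemeasurable.ennreal_ofReal]
    refine lintegral_congr fun x => ?_
    rcases le_or_gt 0 (g x) with hx | hx
    · rw [abs_of_nonneg hx, ENNReal.ofReal_eq_zero.2 (neg_nonpos.2 hx), add_zero]
    · rw [abs_of_neg hx, ENNReal.ofReal_eq_zero.2 hx.le, zero_add]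
  rw [hsum, ← ofReal_integral_eq_lintegral_ofReal hgi.abs (ae_of_all _ fun x => abs_nonneg _),
    ENNReal.toReal_ofReal (integral_nonneg fun x => abs_nonneg _)]
  exact integral_congr_ae (by filter_upwards [hae] with x hx; rw [hx])

end Aux

/-- If a family of finite measures `μ(t) = f(t)·ν` is `L²(ν)`-differentiable at `t₀`, with
derivative `Φ'(t₀)` of `Φ(t) = f(t)^{1/2}` in `L²(ν)`, then the density
`2·f(t₀)^{1/2}·Φ'(t₀)` lies in `L¹(ν)` and the total-variation derivative of the family at
`t₀` exists and equals the signed measure `2·f(t₀)^{1/2}·Φ'(t₀)·ν`. -/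
theorem l2_differentiable_tv_derivative_formula {X : Type*} [MeasurableSpace X]
    (ν : Measure X) [SigmaFinite ν]
    (f : ℝ → X → ℝ) (hfnn : ∀ t x, 0 ≤ f t x)
    (μ : ℝ → Measure X)
    (hμ : ∀ t, μ t = ν.withDensity (fun x => ENNReal.ofReal (f t x)))
    (hfin : ∀ t, IsFiniteMeasure (μ t))
    (t₀ : ℝ)
    (Φ : ℝ → Lp ℝ 2 ν)
    (hΦ : ∀ t, (Φ t : X → ℝ) =ᵐ[ν] fun x => Real.sqrt (f t x))
    (D : Lp ℝ 2 ν)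
    (hD : HasDerivAt Φ D t₀) :
    Integrable (fun x => 2 * Real.sqrt (f t₀ x) * (D : X → ℝ) x) ν ∧
    Filter.Tendsto (fun s : ℝ =>
        (((s⁻¹ • (@Measure.toSignedMeasure X _ (μ (t₀ + s)) (hfin _) -
              @Measure.toSignedMeasure X _ (μ t₀) (hfin _))) -
            ν.withDensityᵥ (fun x => 2 * Real.sqrt (f t₀ x) * (D : X → ℝ) x)).totalVariation
          Set.univ).toReal)
      (nhdsWithin 0 {0}ᶜ) (nhds 0) := by
  classical
  -- a.e. identification of `f t` with the square of `Φ t`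
  have hΦsq : ∀ t, (fun x => f t x) =ᵐ[ν] fun x => (Φ t : X → ℝ) x * (Φ t : X → ℝ) x := by
    intro t
    filter_upwards [hΦ t] with x hx
    rw [hx, Real.mul_self_sqrt (hfnn t x)]
  have hintf : ∀ t, Integrable (fun x => f t x) ν := fun t =>
    (integrable_coe_mul_L2 (Φ t) (Φ t)).congr (hΦsq t).symm
  -- the candidate density
  have hgae : (fun x => 2 * Real.sqrt (f t₀ x) * (D : X → ℝ) x)
      =ᵐ[ν] fun x => 2 * ((Φ t₀ : X → ℝ) x * (D : X → ℝ) x) := by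
    filter_upwards [hΦ t₀] with x hx
    rw [← hx]; ring
  have hgint : Integrable (fun x => 2 * Real.sqrt (f t₀ x) * (D : X → ℝ) x) ν :=
    (((integrable_coe_mul_L2 (Φ t₀) D).const_mul 2)).congr hgae.symm
  refine ⟨hgint, ?_⟩
  -- identify the signed measures with vector densities
  have hsm : ∀ t, @Measure.toSignedMeasure X _ (μ t) (hfin t)
      = ν.withDensityᵥ (fun x => f t x) := by
    intro t
    refine VectorMeasure.ext fun i hi => ?_
    rw [Measure.toSignedMeasure_apply_measurable hi, withDensityᵥ_apply (hintf t) hi, hμ t,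
      measureReal_def, withDensity_apply _ hi,
      integral_eq_lintegral_of_nonneg_ae (ae_of_all _ fun x => hfnn t x) ((hintf t).1.restrict)]
  -- the difference expressed with a single density
  set F : ℝ → X → ℝ := fun s x =>
    s⁻¹ * (f (t₀ + s) x - f t₀ x) - 2 * Real.sqrt (f t₀ x) * (D : X → ℝ) x with hFdef
  have hFint : ∀ s, Integrable (F s) ν := fun s =>
    (((hintf (t₀ + s)).sub (hintf t₀)).const_mul s⁻¹).sub hgint
  have key : ∀ s : ℝ,
      ((s⁻¹ • (@Measure.toSignedMeasure X _ (μ (t₀ + s)) (hfin _) -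
          @Measure.toSignedMeasure X _ (μ t₀) (hfin _))) -
        ν.withDensityᵥ (fun x => 2 * Real.sqrt (f t₀ x) * (D : X → ℝ) x))
      = ν.withDensityᵥ (F s) := by
    intro s
    have h1 : Integrable (fun x => f (t₀ + s) x - f t₀ x) ν := (hintf _).sub (hintf _)
    have h2 : ((fun x => f (t₀ + s) x) - fun x => f t₀ x) = fun x => f (t₀ + s) x - f t₀ x :=
      rfl
    rw [hsm, hsm, ← withDensityᵥ_sub (hintf _) (hintf _), h2,
      ← withDensityᵥ_smul (fun x => f (t₀ + s) x - f t₀ x) s⁻¹,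
      ← withDensityᵥ_sub (h1.smul s⁻¹) hgint]
    congr 1
  -- L² elements used in the bound
  set Q : ℝ → Lp ℝ 2 ν := fun s => s⁻¹ • (Φ (t₀ + s) - Φ t₀) - D with hQdef
  set P : ℝ → Lp ℝ 2 ν := fun s => Φ (t₀ + s) + Φ t₀ with hPdef
  set W : ℝ → Lp ℝ 2 ν := fun s => Φ (t₀ + s) - Φ t₀ with hWdef
  have hFae : ∀ s, (fun x => F s x)
      =ᵐ[ν] fun x => (Q s : X → ℝ) x * (P s : X → ℝ) x
        + (D : X → ℝ) x * (W s : X → ℝ) x := by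
    intro s
    filter_upwards [hΦsq (t₀ + s), hΦsq t₀, hΦ t₀,
      Lp.coeFn_sub (s⁻¹ • (Φ (t₀ + s) - Φ t₀)) D,
      Lp.coeFn_smul s⁻¹ (Φ (t₀ + s) - Φ t₀),
      Lp.coeFn_sub (Φ (t₀ + s)) (Φ t₀),
      Lp.coeFn_add (Φ (t₀ + s)) (Φ t₀)] with x h1 h2 h3 h4 h5 h6 h7
    have hQx : (Q s : X → ℝ) x
        = s⁻¹ * ((Φ (t₀ + s) : X → ℝ) x - (Φ t₀ : X → ℝ) x) - (D : X → ℝ) x := by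
      rw [hQdef]; simp only
      rw [h4]; simp only [Pi.sub_apply]
      rw [h5]; simp only [Pi.smul_apply, smul_eq_mul]
      rw [h6]; simp [Pi.sub_apply]
    have hPx : (P s : X → ℝ) x = (Φ (t₀ + s) : X → ℝ) x + (Φ t₀ : X → ℝ) x := by
      rw [hPdef]; simp only
      rw [h7]; simp [Pi.add_apply]
    have hWx : (W s : X → ℝ) x = (Φ (t₀ + s) : X → ℝ) x - (Φ t₀ : X → ℝ) x := by
      rw [hWdef]; simp only
      rw [h6]; simp [Pi.sub_apply]
    rw [hFdef]; simp only
    rw [h1, ← h3, h2, hQx, hPx, hWx]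
    ring
  -- the key bound
  have hbound : ∀ s, ∫ x, |F s x| ∂ν ≤ ‖Q s‖ * ‖P s‖ + ‖D‖ * ‖W s‖ := by
    intro s
    have hQP : Integrable (fun x => (Q s : X → ℝ) x * (P s : X → ℝ) x) ν :=
      integrable_coe_mul_L2 _ _
    have hDW : Integrable (fun x => (D : X → ℝ) x * (W s : X → ℝ) x) ν :=
      integrable_coe_mul_L2 _ _
    calc ∫ x, |F s x| ∂ν
        = ∫ x, |(Q s : X → ℝ) x * (P s : X → ℝ) x
            + (D : X → ℝ) x * (W s : X → ℝ) x| ∂ν := by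
          refine integral_congr_ae ?_
          filter_upwards [hFae s] with x hx
          rw [hx]
      _ ≤ ∫ x, (|(Q s : X → ℝ) x * (P s : X → ℝ) x|
            + |(D : X → ℝ) x * (W s : X → ℝ) x|) ∂ν := by
          refine integral_mono (hQP.add hDW).abs (hQP.abs.add hDW.abs) ?_
          intro x
          exact abs_add_le _ _
      _ = (∫ x, |(Q s : X → ℝ) x * (P s : X → ℝ) x| ∂ν)
            + ∫ x, |(D : X → ℝ) x * (W s : X → ℝ) x| ∂ν :=
          integral_add hQP.abs hDW.abs
      _ ≤ ‖Q s‖ * ‖P s‖ + ‖D‖ * ‖W s‖ :=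
          add_le_add (integral_abs_mul_le_L2 _ _) (integral_abs_mul_le_L2 _ _)
  -- limits
  have hcont : Tendsto (fun s : ℝ => Φ (t₀ + s)) (nhdsWithin 0 {0}ᶜ) (nhds (Φ t₀)) := by
    have h1 : ContinuousAt Φ t₀ := hD.continuousAt
    have h2 : Tendsto (fun s : ℝ => t₀ + s) (nhdsWithin 0 {0}ᶜ) (nhds t₀) := by
      have h3 : Tendsto (fun s : ℝ => t₀ + s) (nhds 0) (nhds t₀) := by
        exact (continuous_add_left t₀).tendsto' 0 t₀ (by simp)
      exact h3.mono_left nhdsWithin_le_nhds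
    exact h1.tendsto.comp h2
  have hQ0 : Tendsto Q (nhdsWithin 0 {0}ᶜ) (nhds 0) := by
    have h2 := hD.tendsto_slope_zero.sub_const D
    rw [sub_self] at h2
    exact h2
  have hW0 : Tendsto W (nhdsWithin 0 {0}ᶜ) (nhds 0) := by
    have h2 := hcont.sub_const (Φ t₀)
    rw [sub_self] at h2
    exact h2
  have hB : Tendsto (fun s => ‖Q s‖ * ‖P s‖ + ‖D‖ * ‖W s‖)
      (nhdsWithin 0 {0}ᶜ) (nhds 0) := by
    have h1 : Tendsto (fun s => ‖Q s‖) (nhdsWithin (0:ℝ) {0}ᶜ) (nhds 0) := by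
      have := hQ0.norm
      rwa [norm_zero] at this
    have h2 : Tendsto (fun s => ‖P s‖) (nhdsWithin (0:ℝ) {0}ᶜ) (nhds (‖Φ t₀ + Φ t₀‖)) := by
      exact ((hcont.add (tendsto_const_nhds : Filter.Tendsto (fun _ : ℝ => Φ t₀) (nhdsWithin 0 {0}ᶜ) (nhds (Φ t₀)))).norm)
    have h3 : Tendsto (fun s => ‖W s‖) (nhdsWithin (0:ℝ) {0}ᶜ) (nhds 0) := by
      have := hW0.norm
      rwa [norm_zero] at this
    have h4 := (h1.mul h2).add ((tendsto_const_nhds : Filter.Tendsto (fun _ : ℝ => ‖D‖) (nhdsWithin 0 {0}ᶜ) (nhds ‖D‖)).mul h3)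
    rwa [zero_mul, mul_zero, add_zero] at h4
  refine squeeze_zero (fun s => ENNReal.toReal_nonneg) (fun s => ?_) hB
  calc (((s⁻¹ • (@Measure.toSignedMeasure X _ (μ (t₀ + s)) (hfin _) -
          @Measure.toSignedMeasure X _ (μ t₀) (hfin _))) -
        ν.withDensityᵥ (fun x => 2 * Real.sqrt (f t₀ x) * (D : X → ℝ) x)).totalVariation
        Set.univ).toReal
      = ∫ x, |F s x| ∂ν := by
        rw [key s, totalVariation_withDensityᵥ_univ_toReal (hFint s)]
    _ ≤ ‖Q s‖ * ‖P s‖ + ‖D‖ * ‖W s‖ := hbound s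
end

section
/- With p(x,t) as defined (p(x,t) = 1 + tφ(x) if tφ(x) ≥ 0, exp(tφ(x)) otherwise, for bounded measurable φ with ∫φ dμ = 0), the curve of probability measures μ(t) = (p(·,t)/c(t))·μ, where c(t) = ∫ p(x,t) dμ(x), satisfies μ(0) = μ and is differentiable at t = 0 in total variation norm with derivative μ'(0) = φ·μ. -/
open MeasureTheory

lemma my_totalVariation_withDensityv {X : Type*} [MeasurableSpace X] (μ : Measure X)
    (g : X → ℝ) (hgm : Measurable g) (hgi : Integrable g μ) :
    ((SignedMeasure.totalVariation (μ.withDensityᵥ g)) Set.univ).toReal = ∫ x, |g x| ∂μ := by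
  haveI h1 : IsFiniteMeasure (μ.withDensity fun x => ENNReal.ofReal (g x)) :=
    isFiniteMeasure_withDensity_ofReal hgi.2
  haveI h2 : IsFiniteMeasure (μ.withDensity fun x => ENNReal.ofReal (-g x)) :=
    isFiniteMeasure_withDensity_ofReal hgi.neg.2
  set j : JordanDecomposition X :=
    ⟨μ.withDensity fun x => ENNReal.ofReal (g x), μ.withDensity fun x => ENNReal.ofReal (-g x),
      withDensity_ofReal_mutuallySingular hgm⟩ with hjdef
  have hj : SignedMeasure.toJordanDecomposition (μ.withDensityᵥ g) = j := by
    apply SignedMeasure.toJordanDecomposition_eq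
    rw [JordanDecomposition.toSignedMeasure]
    exact withDensityᵥ_eq_withDensity_pos_part_sub_withDensity_neg_part hgi
  rw [SignedMeasure.totalVariation, hj]
  have hpos : j.posPart = μ.withDensity fun x => ENNReal.ofReal (g x) := rfl
  have hneg : j.negPart = μ.withDensity fun x => ENNReal.ofReal (-g x) := rfl
  rw [Measure.add_apply, hpos, hneg, withDensity_apply _ MeasurableSet.univ,
    withDensity_apply _ MeasurableSet.univ, Measure.restrict_univ,
    ← lintegral_add_left hgm.ennreal_ofReal]
  have habs : ∀ x, ENNReal.ofReal (g x) + ENNReal.ofReal (-g x) = ENNReal.ofReal |g x| := by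
    intro x
    rcases le_total 0 (g x) with h | h
    · rw [show ENNReal.ofReal (-g x) = 0 from ENNReal.ofReal_eq_zero.2 (by linarith), add_zero,
        abs_of_nonneg h]
    · rw [show ENNReal.ofReal (g x) = 0 from ENNReal.ofReal_eq_zero.2 h, zero_add,
        abs_of_nonpos h]
  simp_rw [habs]
  rw [← ofReal_integral_eq_lintegral_ofReal hgi.abs (Filter.Eventually.of_forall fun x => abs_nonneg _),
    ENNReal.toReal_ofReal (integral_nonneg fun x => abs_nonneg _)]

/-- With `p(x,t) = 1 + t·φ(x)` if `t·φ(x) ≥ 0` and `exp(t·φ(x))` otherwise, for bounded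
measurable `φ` with `∫ φ dμ = 0`, the normalized curve of probability measures
`μ(t) = (p(·,t)/c(t))·μ`, where `c(t) = ∫ p(x,t) dμ`, satisfies `μ(0) = μ` and is
differentiable at `t = 0` in the total variation norm with derivative `μ'(0) = φ·μ`. -/
theorem piecewise_curve_tv_derivative {X : Type*} [MeasurableSpace X]
    (μ : Measure X) [IsProbabilityMeasure μ]
    (φ : X → ℝ) (hφm : Measurable φ) (C : ℝ) (hC : ∀ x, |φ x| ≤ C)
    (hmean : ∫ x, φ x ∂μ = 0)
    (p : X → ℝ → ℝ)
    (hp : ∀ x t, p x t = if 0 ≤ t * φ x then 1 + t * φ x else Real.exp (t * φ x))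
    (c : ℝ → ℝ) (hc : ∀ t, c t = ∫ x, p x t ∂μ) :
    μ.withDensityᵥ (fun x => p x 0 / c 0) = μ.toSignedMeasure ∧
    Filter.Tendsto (fun t : ℝ =>
        ((SignedMeasure.totalVariation
            (t⁻¹ • (μ.withDensityᵥ (fun x => p x t / c t) -
              μ.withDensityᵥ (fun x => p x 0 / c 0)) -
            μ.withDensityᵥ φ) Set.univ).toReal))
      (nhdsWithin 0 {0}ᶜ) (nhds 0) := by
  have hp0 : ∀ x, p x 0 = 1 := fun x => by simp [hp]
  have hc0 : c 0 = 1 := by simp [hc, hp0]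
  have hf0 : (fun x => p x 0 / c 0) = fun _ => (1 : ℝ) := funext fun x => by
    rw [hp0, hc0, div_one]
  have hX : Nonempty X := by
    by_contra h
    rw [not_nonempty_iff] at h
    have h1 := measure_univ (μ := μ)
    rw [Set.univ_eq_empty_iff.2 h, measure_empty] at h1
    exact zero_ne_one h1
  have hC0 : 0 ≤ C := le_trans (abs_nonneg _) (hC hX.some)
  have hφi : Integrable φ μ :=
    Integrable.mono' (integrable_const C) hφm.aestronglyMeasurable (Filter.Eventually.of_forall hC)
  -- measurability and integrability of p · t
  have hpm : ∀ t, Measurable fun x => p x t := by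
    intro t
    have : (fun x => p x t) =
        fun x => if 0 ≤ t * φ x then 1 + t * φ x else Real.exp (t * φ x) :=
      funext fun x => hp x t
    rw [this]
    exact Measurable.ite (measurableSet_le measurable_const (hφm.const_mul t))
      (measurable_const.add (hφm.const_mul t)) (hφm.const_mul t).exp
  have hpbound : ∀ t x, |p x t| ≤ 1 + |t| * C := by
    intro t x
    have h1 : |t * φ x| ≤ |t| * C := by
      rw [abs_mul]
      exact mul_le_mul_of_nonneg_left (hC x) (abs_nonneg t)
    rw [hp]
    split_ifs with h
    · rw [abs_of_nonneg (by linarith)]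
      have := abs_le.1 h1
      linarith
    · rw [abs_of_nonneg (Real.exp_nonneg _)]
      have h2 : t * φ x ≤ 0 := le_of_lt (lt_of_not_ge h)
      have h3 := Real.exp_le_one_iff.2 h2
      have h4 : 0 ≤ |t| * C := mul_nonneg (abs_nonneg t) hC0
      linarith
  have hpi : ∀ t, Integrable (fun x => p x t) μ := fun t =>
    Integrable.mono' (integrable_const (1 + |t| * C)) (hpm t).aestronglyMeasurable
      (Filter.Eventually.of_forall (hpbound t))
  constructor
  · rw [hf0]
    ext s hs
    rw [withDensityᵥ_apply (integrable_const 1) hs, Measure.toSignedMeasure_apply_measurable hs,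
      setIntegral_const, smul_eq_mul, mul_one]
  · set δ : ℝ := 1 / (2 * (C + 1)) with hδdef
    have hδpos : 0 < δ := by positivity
    -- key pointwise estimate for small t
    refine squeeze_zero' (g := fun t => 6 * |t| * C ^ 2)
      (Filter.Eventually.of_forall fun t => ENNReal.toReal_nonneg) ?_ ?_
    · -- bound the function eventually by 6*|t|*C^2
      have hmem : ∀ᶠ t : ℝ in nhdsWithin 0 {0}ᶜ, |t| ≤ δ ∧ t ≠ 0 := by
        refine Filter.Eventually.and ?_ (eventually_mem_nhdsWithin.mono fun t ht => ht)
        refine Filter.Eventually.filter_mono nhdsWithin_le_nhds ?_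
        filter_upwards [Metric.ball_mem_nhds (0 : ℝ) hδpos] with t ht
        rw [Metric.mem_ball, Real.dist_eq, sub_zero] at ht
        exact ht.le
      filter_upwards [hmem] with t ht
      obtain ⟨htδ, ht0⟩ := ht
      -- basic smallness facts
      have htC : |t| * C ≤ 1 / 2 := by
        have : |t| * (2 * (C + 1)) ≤ 1 := by
          rw [hδdef] at htδ
          rw [← le_div_iff₀ (by positivity)]
          exact htδ
        nlinarith [abs_nonneg t]
      have ht1 : ∀ x, |t * φ x| ≤ 1 := by
        intro x
        rw [abs_mul]
        have := mul_le_mul_of_nonneg_left (hC x) (abs_nonneg t)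
        linarith
      -- |p x t - (1 + t φ x)| ≤ t² C²
      have key1 : ∀ x, |p x t - (1 + t * φ x)| ≤ t ^ 2 * C ^ 2 := by
        intro x
        rw [hp]
        split_ifs with h
        · simp only [sub_self, abs_zero]
          positivity
        · have h2 := Real.abs_exp_sub_one_sub_id_le (ht1 x)
          have h3 : |Real.exp (t * φ x) - (1 + t * φ x)| = |Real.exp (t * φ x) - 1 - t * φ x| := by
            ring_nf
          rw [h3]
          refine h2.trans ?_
          have h4 : |t * φ x| ≤ |t| * C := by
            rw [abs_mul]; exact mul_le_mul_of_nonneg_left (hC x) (abs_nonneg t)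
          calc (t * φ x) ^ 2 = |t * φ x| ^ 2 := (sq_abs _).symm
            _ ≤ (|t| * C) ^ 2 := by nlinarith [abs_nonneg (t * φ x)]
            _ = t ^ 2 * C ^ 2 := by rw [mul_pow, sq_abs]
      -- |c t - 1| ≤ t² C²
      have hint1 : Integrable (fun x => 1 + t * φ x) μ :=
        (integrable_const 1).add (hφi.const_mul t)
      have keyc : |c t - 1| ≤ t ^ 2 * C ^ 2 := by
        have e1 : c t - 1 = ∫ x, (p x t - (1 + t * φ x)) ∂μ := by
          rw [integral_sub (hpi t) hint1, integral_add (integrable_const 1) (hφi.const_mul t),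
            integral_const, integral_const_mul, hmean, hc]
          simp
        rw [e1]
        have habsint : |∫ x, (p x t - (1 + t * φ x)) ∂μ| ≤ ∫ x, |p x t - (1 + t * φ x)| ∂μ := by
          have := norm_integral_le_integral_norm (μ := μ) (f := fun x => p x t - (1 + t * φ x))
          simpa [Real.norm_eq_abs] using this
        refine habsint.trans ?_
        refine (integral_mono ((hpi t).sub hint1).abs (integrable_const _) key1).trans ?_
        simp
      have hc2 : 1 / 2 ≤ c t := by
        have h5 : t ^ 2 * C ^ 2 ≤ 1 / 4 := by
          have : (|t| * C) ^ 2 ≤ (1 / 2) ^ 2 := by nlinarith [abs_nonneg t, mul_nonneg (abs_nonneg t) hC0]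
          calc t ^ 2 * C ^ 2 = (|t| * C) ^ 2 := by rw [mul_pow, sq_abs]
            _ ≤ (1 / 2) ^ 2 := this
            _ ≤ 1 / 4 := by norm_num
        have := abs_le.1 keyc
        linarith
      have hcpos : 0 < c t := by linarith
      -- rewrite signed measure expression as withDensityᵥ of a single function
      have hipc : Integrable (fun x => p x t / c t) μ := (hpi t).div_const _
      set g : X → ℝ := fun x => t⁻¹ * (p x t / c t - 1) - φ x with hgdef
      have hgm : Measurable g := (((hpm t).div_const _).sub measurable_const).const_mul t⁻¹
        |>.sub hφm
      have hgi : Integrable g μ :=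
        (((hipc.sub (integrable_const 1)).const_mul t⁻¹).sub hφi)
      have hrw : μ.withDensityᵥ g = t⁻¹ • (μ.withDensityᵥ (fun x => p x t / c t) -
            μ.withDensityᵥ (fun x => p x 0 / c 0)) - μ.withDensityᵥ φ := by
        rw [hf0]
        have e1 : μ.withDensityᵥ g =
            μ.withDensityᵥ (fun x => t⁻¹ * (p x t / c t - 1)) - μ.withDensityᵥ φ :=
          withDensityᵥ_sub' ((hipc.sub (integrable_const 1)).const_mul t⁻¹) hφi
        rw [e1]
        congr 1
        have e2 : (fun x => t⁻¹ * (p x t / c t - 1)) =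
            fun x => t⁻¹ • (p x t / c t - 1) := rfl
        rw [e2, withDensityᵥ_smul' (fun x => p x t / c t - 1) t⁻¹,
          withDensityᵥ_sub' hipc (integrable_const 1)]
      rw [← hrw, my_totalVariation_withDensityv μ g hgm hgi]
      -- pointwise bound on g
      have keyg : ∀ x, |g x| ≤ 6 * |t| * C ^ 2 := by
        intro x
        have e3 : g x = (p x t - c t - t * φ x * c t) / (t * c t) := by
          rw [hgdef]
          field_simp
        rw [e3, abs_div]
        rw [div_le_iff₀ (by positivity : (0:ℝ) < |t * c t|)]
        have h4 : |t * φ x| ≤ |t| * C := by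
          rw [abs_mul]; exact mul_le_mul_of_nonneg_left (hC x) (abs_nonneg t)
        have hnum : |p x t - c t - t * φ x * c t| ≤ 3 * (t ^ 2 * C ^ 2) := by
          have e4 : p x t - c t - t * φ x * c t =
              (p x t - (1 + t * φ x)) - (c t - 1) - t * φ x * (c t - 1) := by ring
          rw [e4]
          have h6 : |t * φ x * (c t - 1)| ≤ t ^ 2 * C ^ 2 := by
            rw [abs_mul]
            have h7 : |t * φ x| * |c t - 1| ≤ 1 * (t ^ 2 * C ^ 2) :=
              mul_le_mul ((ht1 x)) keyc (abs_nonneg _) (by norm_num)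
            linarith
          calc |(p x t - (1 + t * φ x)) - (c t - 1) - t * φ x * (c t - 1)|
              ≤ |p x t - (1 + t * φ x)| + |c t - 1| + |t * φ x * (c t - 1)| := by
                have := abs_sub (p x t - (1 + t * φ x) - (c t - 1)) (t * φ x * (c t - 1))
                have := abs_sub (p x t - (1 + t * φ x)) (c t - 1)
                calc |(p x t - (1 + t * φ x)) - (c t - 1) - t * φ x * (c t - 1)|
                    ≤ |(p x t - (1 + t * φ x)) - (c t - 1)| + |t * φ x * (c t - 1)| :=
                      abs_sub _ _
                  _ ≤ |p x t - (1 + t * φ x)| + |c t - 1| + |t * φ x * (c t - 1)| := by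
                      have := abs_sub (p x t - (1 + t * φ x)) (c t - 1)
                      linarith
            _ ≤ 3 * (t ^ 2 * C ^ 2) := by linarith [key1 x, keyc]
        have hden : |t| / 2 ≤ |t * c t| := by
          rw [abs_mul, abs_of_pos hcpos]
          nlinarith [abs_nonneg t]
        calc |p x t - c t - t * φ x * c t| ≤ 3 * (t ^ 2 * C ^ 2) := hnum
          _ = 6 * C ^ 2 * |t| * (|t| / 2) := by rw [← sq_abs t]; ring
          _ ≤ 6 * C ^ 2 * |t| * |t * c t| := by
              refine mul_le_mul_of_nonneg_left hden (by positivity)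
          _ = 6 * |t| * C ^ 2 * |t * c t| := by ring
      refine (integral_mono hgi.abs (integrable_const _)
        (fun x => keyg x)).trans ?_
      simp
    · have hcont : Filter.Tendsto (fun t : ℝ => 6 * |t| * C ^ 2) (nhds 0) (nhds 0) := by
        have : Continuous fun t : ℝ => 6 * |t| * C ^ 2 :=
          (continuous_const.mul continuous_abs).mul continuous_const
        have h := this.tendsto 0
        simpa using h
      exact hcont.mono_left nhdsWithin_le_nhds
end

section
/- For an exponential-type curve through a probability measure μ: given bounded measurable φ with ∫ φ dμ = 0, the curve μ(t) = e^{tφ}/Z(t) · μ with Z(t) = ∫ e^{tφ} dμ is L²-differentiable at t = 0, i.e., t ↦ (e^{tφ}/Z(t))^{1/2} is differentiable into L²(μ) at 0, with derivative φ/2, and the Fisher norm of the velocity μ'(0) = φ·μ equals ‖φ‖_{L²(μ)}. -/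
open MeasureTheory Filter

section Aux

lemma key_core (s u c : ℝ) (hc : 0 ≤ c) (hs1 : |s| ≤ 1/2) (hs2 : s ^ 2 ≤ c / 4)
    (huhalf : 1/2 ≤ u) (hZ : |u ^ 2 - 1| ≤ c) :
    |Real.exp s / u - 1 - s| ≤ 7 * c := by
  have hupos : (0:ℝ) < u := by linarith
  have h1 : |Real.exp s - 1 - s| ≤ s ^ 2 :=
    Real.abs_exp_sub_one_sub_id_le (by linarith [abs_le.1 hs1, abs_nonneg s])
  have hexps : Real.exp s ≤ 3 := by
    have h9 := Real.exp_one_lt_d9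
    calc Real.exp s ≤ Real.exp 1 := Real.exp_le_exp.2 (by linarith [abs_le.1 hs1])
    _ ≤ 3 := by linarith
  have hinv : |1/u - 1| ≤ 2 * c := by
    have h1u : |1 - u| ≤ c := by
      have hfac : (1 - u) * (1 + u) = 1 - u ^ 2 := by ring
      have h1u' : |1 - u| * (1 + u) = |1 - u ^ 2| := by
        rw [← abs_of_pos (show (0:ℝ) < 1 + u by linarith), ← abs_mul, hfac]
      calc |1 - u| ≤ |1 - u| * (1 + u) := by nlinarith [abs_nonneg (1 - u)]
        _ = |1 - u ^ 2| := h1u'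
        _ = |u ^ 2 - 1| := abs_sub_comm _ _
        _ ≤ c := hZ
    have heq : |1/u - 1| = |1 - u| / u := by
      rw [abs_sub_comm, show (1:ℝ) - 1/u = (u - 1)/u by field_simp, abs_div,
        abs_of_pos hupos, abs_sub_comm]
    rw [heq, div_le_iff₀ hupos]
    calc |1 - u| ≤ c := h1u
    _ = 2 * c * (1/2) := by ring
    _ ≤ 2 * c * u := by
        apply mul_le_mul_of_nonneg_left huhalf; positivity
  have hdecomp : Real.exp s / u - 1 - s
      = (Real.exp s - 1 - s) + Real.exp s * (1/u - 1) := by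
    rw [mul_sub, mul_one_div, mul_one]; ring
  rw [hdecomp]
  calc |(Real.exp s - 1 - s) + Real.exp s * (1/u - 1)|
      ≤ |Real.exp s - 1 - s| + |Real.exp s * (1/u - 1)| := abs_add_le _ _
    _ ≤ s ^ 2 + 3 * (2 * c) := by
        gcongr
        rw [abs_mul, abs_of_pos (Real.exp_pos s)]
        exact mul_le_mul hexps hinv (abs_nonneg _) (by norm_num)
    _ ≤ 7 * c := by linarith

lemma key_pointwise (B t a Zt : ℝ) (ha : |a| ≤ B)
    (htB : |t| * B ≤ 1)
    (hZ1 : |Zt - 1| ≤ t ^ 2 * B ^ 2) (hZlo : (1:ℝ)/4 ≤ Zt) :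
    |Real.sqrt (Real.exp (t * a) / Zt) - 1 - t * a / 2| ≤ 7 * (t ^ 2 * B ^ 2) := by
  have hZpos : 0 < Zt := by linarith
  have hsqrt : Real.sqrt (Real.exp (t * a) / Zt)
      = Real.exp (t * a / 2) / Real.sqrt Zt := by
    rw [Real.sqrt_div (Real.exp_nonneg _), ← Real.exp_half]
  have hu2 : Real.sqrt Zt ^ 2 = Zt := Real.sq_sqrt hZpos.le
  have huhalf : (1:ℝ)/2 ≤ Real.sqrt Zt := by
    rw [show (1:ℝ)/2 = Real.sqrt (1/4) by
      rw [show (1:ℝ)/4 = (1/2)^2 by norm_num, Real.sqrt_sq (by norm_num)]]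
    exact Real.sqrt_le_sqrt hZlo
  have hta : |t * a| ≤ |t| * B := by
    rw [abs_mul]; exact mul_le_mul_of_nonneg_left ha (abs_nonneg t)
  have hs1 : |t * a / 2| ≤ 1/2 := by
    rw [abs_div, abs_of_nonneg (by norm_num : (0:ℝ) ≤ 2)]
    linarith
  have hs2 : (t * a / 2) ^ 2 ≤ t ^ 2 * B ^ 2 / 4 := by
    have h : a ^ 2 ≤ B ^ 2 := by
      have := abs_le.1 ha; nlinarith
    nlinarith [sq_nonneg t]
  have hc : (0:ℝ) ≤ t ^ 2 * B ^ 2 := by positivity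
  rw [hsqrt]
  exact key_core (t * a / 2) (Real.sqrt Zt) (t ^ 2 * B ^ 2) hc hs1 hs2 huhalf
    (by rw [hu2]; exact hZ1)

end Aux

/-- For the exponential-type curve `μ(t) = e^{tφ}/Z(t)·μ` through a probability measure `μ`,
with `φ` bounded measurable of mean zero and partition function `Z(t) = ∫ e^{tφ} dμ`, the
curve of square-root densities `Φ(t) = (e^{tφ}/Z(t))^{1/2} ∈ L²(μ)` is differentiable at
`t = 0` with derivative `φ/2`, and the Fisher norm of the velocity `μ'(0) = φ·μ`, namely
`(∫ φ² dμ)^{1/2}`, equals `‖φ‖_{L²(μ)}`. -/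
theorem exponential_curve_l2_differentiable {X : Type*} [MeasurableSpace X]
    (μ : Measure X) [IsProbabilityMeasure μ]
    (φ : X → ℝ) (hφm : Measurable φ) (C : ℝ) (hC : ∀ x, |φ x| ≤ C)
    (hmean : ∫ x, φ x ∂μ = 0)
    (Z : ℝ → ℝ) (hZ : ∀ t, Z t = ∫ x, Real.exp (t * φ x) ∂μ)
    (Φ : ℝ → Lp ℝ 2 μ)
    (hΦ : ∀ t, (Φ t : X → ℝ) =ᵐ[μ] fun x => Real.sqrt (Real.exp (t * φ x) / Z t))
    (D : Lp ℝ 2 μ) (hD : (D : X → ℝ) =ᵐ[μ] fun x => φ x / 2) :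
    HasDerivAt Φ D 0 ∧
    Real.sqrt (∫ x, φ x ^ 2 ∂μ) = (eLpNorm φ 2 μ).toReal := by
  set B := |C| with hBdef
  have hB : 0 ≤ B := abs_nonneg C
  have hφB : ∀ x, |φ x| ≤ B := fun x => (hC x).trans (le_abs_self C)
  -- integrability
  have hintexp : ∀ t : ℝ, Integrable (fun x => Real.exp (t * φ x)) μ := by
    intro t
    refine Integrable.mono' (integrable_const (Real.exp (|t| * B)))
      ((Real.measurable_exp.comp (hφm.const_mul t)).aestronglyMeasurable)
      (ae_of_all _ fun x => ?_)
    rw [Real.norm_eq_abs, abs_of_pos (Real.exp_pos _)]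
    refine Real.exp_le_exp.2 ?_
    calc t * φ x ≤ |t * φ x| := le_abs_self _
      _ ≤ |t| * B := by
          rw [abs_mul]; exact mul_le_mul_of_nonneg_left (hφB x) (abs_nonneg t)
  have hintφ : Integrable φ μ :=
    Integrable.mono' (integrable_const B) hφm.aestronglyMeasurable
      (ae_of_all _ fun x => by rw [Real.norm_eq_abs]; exact hφB x)
  have htφB : ∀ (t : ℝ) x, |t * φ x| ≤ |t| * B := fun t x => by
    rw [abs_mul]; exact mul_le_mul_of_nonneg_left (hφB x) (abs_nonneg t)
  -- lower bound on Z
  have hquarter : (1:ℝ)/4 ≤ Real.exp (-1) := by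
    have hm : Real.exp (-1) * Real.exp 1 = 1 := by rw [← Real.exp_add]; norm_num
    nlinarith [Real.exp_one_lt_d9, Real.exp_pos (-1:ℝ)]
  have hZlo : ∀ t : ℝ, |t| * B ≤ 1 → (1:ℝ)/4 ≤ Z t := by
    intro t ht
    rw [hZ]
    have hle : (fun _ : X => Real.exp (-1:ℝ)) ≤ fun x => Real.exp (t * φ x) := by
      intro x
      refine Real.exp_le_exp.2 ?_
      have h1 := htφB t x
      have h2 := neg_abs_le (t * φ x)
      linarith
    calc (1:ℝ)/4 ≤ Real.exp (-1) := hquarter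
      _ = ∫ _ : X, Real.exp (-1:ℝ) ∂μ := by simp
      _ ≤ ∫ x, Real.exp (t * φ x) ∂μ := integral_mono (integrable_const _) (hintexp t) hle
  -- upper bound on |Z - 1|
  have hZub : ∀ t : ℝ, |t| * B ≤ 1 → |Z t - 1| ≤ t ^ 2 * B ^ 2 := by
    intro t ht
    have hint1 : Integrable (fun x => Real.exp (t * φ x) - 1 - t * φ x) μ :=
      ((hintexp t).sub (integrable_const 1)).sub (hintφ.const_mul t)
    have hA : Integrable (fun x => Real.exp (t * φ x) - 1) μ :=
      (hintexp t).sub (integrable_const 1)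
    have hBint : Integrable (fun x => t * φ x) μ := hintφ.const_mul t
    have hZt : Z t - 1 = ∫ x, (Real.exp (t * φ x) - 1 - t * φ x) ∂μ := by
      rw [integral_sub hA hBint, integral_sub (hintexp t) (integrable_const 1),
        integral_const, integral_const_mul, hmean, hZ]
      simp
    rw [hZt]
    calc |∫ x, (Real.exp (t * φ x) - 1 - t * φ x) ∂μ|
        ≤ ∫ x, |Real.exp (t * φ x) - 1 - t * φ x| ∂μ := by
          rw [← Real.norm_eq_abs]
          exact (norm_integral_le_integral_norm _)
      _ ≤ ∫ _ : X, t ^ 2 * B ^ 2 ∂μ := by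
          refine integral_mono hint1.abs (integrable_const _) fun x => ?_
          have h1 : |t * φ x| ≤ 1 := (htφB t x).trans ht
          have h2 := Real.abs_exp_sub_one_sub_id_le h1
          have h3 : (t * φ x) ^ 2 ≤ t ^ 2 * B ^ 2 := by
            have h4 : φ x ^ 2 ≤ B ^ 2 := by
              have := abs_le.1 (hφB x); nlinarith
            nlinarith [mul_le_mul_of_nonneg_left h4 (sq_nonneg t)]
          exact h2.trans h3
      _ = t ^ 2 * B ^ 2 := by simp
  -- Φ 0 is a.e. 1
  have hZ0 : Z 0 = 1 := by rw [hZ]; simp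
  have hΦ0 : (Φ 0 : X → ℝ) =ᵐ[μ] fun _ => 1 :=
    (hΦ 0).trans (ae_of_all _ fun x => by simp [hZ0])
  -- norm bound for the slope
  have key : ∀ t : ℝ, t ≠ 0 → |t| * B ≤ 1 → ‖slope Φ 0 t - D‖ ≤ 7 * B ^ 2 * |t| := by
    intro t ht htB
    have hslope : slope Φ 0 t = t⁻¹ • (Φ t - Φ 0) := by
      rw [slope_def_module]; simp
    have hae : ((slope Φ 0 t - D : Lp ℝ 2 μ) : X → ℝ) =ᵐ[μ]
        fun x => t⁻¹ * (Real.sqrt (Real.exp (t * φ x) / Z t) - 1) - φ x / 2 := by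
      rw [hslope]
      filter_upwards [Lp.coeFn_sub (t⁻¹ • (Φ t - Φ 0)) D,
        Lp.coeFn_smul (t⁻¹ : ℝ) (Φ t - Φ 0), Lp.coeFn_sub (Φ t) (Φ 0),
        hΦ t, hΦ0, hD] with x e1 e2 e3 e4 e5 e6
      rw [e1, Pi.sub_apply, e2, Pi.smul_apply, e3, Pi.sub_apply, e4, e5, e6,
        smul_eq_mul]
    have hbound : ∀ᵐ x ∂μ,
        ‖t⁻¹ * (Real.sqrt (Real.exp (t * φ x) / Z t) - 1) - φ x / 2‖
          ≤ 7 * B ^ 2 * |t| := by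
      refine ae_of_all _ fun x => ?_
      have hk := key_pointwise B t (φ x) (Z t) (hφB x) htB (hZub t htB) (hZlo t htB)
      rw [Real.norm_eq_abs]
      have heq : t⁻¹ * (Real.sqrt (Real.exp (t * φ x) / Z t) - 1) - φ x / 2
          = t⁻¹ * (Real.sqrt (Real.exp (t * φ x) / Z t) - 1 - t * φ x / 2) := by
        field_simp
      rw [heq, abs_mul, abs_inv]
      have htpos : 0 < |t| := abs_pos.2 ht
      rw [inv_mul_le_iff₀ htpos]
      calc |Real.sqrt (Real.exp (t * φ x) / Z t) - 1 - t * φ x / 2|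
          ≤ 7 * (t ^ 2 * B ^ 2) := hk
        _ = |t| * (7 * B ^ 2 * |t|) := by rw [← sq_abs t]; ring
    rw [Lp.norm_def, eLpNorm_congr_ae hae]
    refine ENNReal.toReal_le_of_le_ofReal (by positivity) ?_
    refine le_trans (eLpNorm_le_of_ae_bound hbound) ?_
    simp [measure_univ]
  constructor
  · rw [hasDerivAt_iff_tendsto_slope, tendsto_iff_norm_sub_tendsto_zero]
    refine squeeze_zero' (g := fun t => 7 * B ^ 2 * |t|)
      (Eventually.of_forall fun t => norm_nonneg _) ?_ ?_
    · have hδ : (0:ℝ) < 1 / (B + 1) := by positivity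
      have h1 : ∀ᶠ t : ℝ in nhds 0, |t - 0| < 1 / (B + 1) :=
        eventually_abs_sub_lt 0 hδ
      filter_upwards [eventually_nhdsWithin_of_eventually_nhds h1,
        self_mem_nhdsWithin] with t h1 h2
      refine key t h2 ?_
      rw [sub_zero] at h1
      have hB1 : (0:ℝ) < B + 1 := by linarith
      have h3 : |t| * (B + 1) < 1 := by
        calc |t| * (B + 1) < (1/(B+1)) * (B+1) := mul_lt_mul_of_pos_right h1 hB1
          _ = 1 := by field_simp
      nlinarith [abs_nonneg t]
    · have hcont : Continuous fun t : ℝ => 7 * B ^ 2 * |t| := by continuity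
      have := hcont.tendsto 0
      simp only [abs_zero, mul_zero] at this
      exact this.mono_left nhdsWithin_le_nhds
  · -- Fisher norm identity
    have hmem : MemLp φ 2 μ :=
      MemLp.of_bound hφm.aestronglyMeasurable B (ae_of_all _ fun x => by
        rw [Real.norm_eq_abs]; exact hφB x)
    rw [hmem.eLpNorm_eq_integral_rpow_norm two_ne_zero ENNReal.ofNat_ne_top,
      ENNReal.toReal_ofReal (by positivity)]
    have h2 : ∀ a : X, ‖φ a‖ ^ (2 : ENNReal).toReal = φ a ^ 2 := fun a => by
      rw [ENNReal.toReal_ofNat]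
      rw [show ((2:ℝ)) = ((2:ℕ):ℝ) by norm_num, Real.rpow_natCast, Real.norm_eq_abs, sq_abs]
    simp_rw [h2]
    rw [Real.sqrt_eq_rpow, ENNReal.toReal_ofNat, one_div]
end
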